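/- arXiv:1911.05876 — 3 statements merged into one kernel-verified Lean document; each statement's English description precedes it below -/
import Mathlib

section
/- Suppose every explanation action e_o for observation o has as precondition the ordering fluent p_{o'} for every observation o' nested in a group immediately preceding a group containing o, no action deletes any ordering fluent, and all ordering fluents are initially false. Then in any valid plan achieving all ordering fluents, every explanation action for an observation in an earlier member of an ordered group occurs strictly before every explanation action for an observation in a later member. -/
/-- A STRIPS action with positive preconditions `pre`, negative preconditions `npre`
(fluents that must be false), add list and delete list. -/
structure StripsAction (F : Type*) where
  pre : Set F
  npre : Set F
  add : Set F
  del : Set F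

/-- Applying an action to a state: `s' = (s \ del a) ∪ add a`. -/
def applyAction {F : Type*} (s : Set F) (a : StripsAction F) : Set F :=
  (s \ a.del) ∪ a.add

/-- The `i`-th state of the execution trace of `π` from `I`. -/
def stateAt {F : Type*} (I : Set F) (π : List (StripsAction F)) (i : ℕ) : Set F :=
  (π.take i).foldl applyAction I

/-- An action is applicable in state `s` iff its positive preconditions hold
and its negative preconditions do not hold in `s`. -/
def Applicable {F : Type*} (s : Set F) (a : StripsAction F) : Prop :=
  a.pre ⊆ s ∧ ∀ p ∈ a.npre, p ∉ s

/-- A valid plan: every action is applicable in the state produced by its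
predecessors, starting from the initial state. -/
def ValidPlan {F : Type*} (I : Set F) (π : List (StripsAction F)) : Prop :=
  ∀ i, ∀ a, π[i]? = some a → Applicable (stateAt I π i) a

lemma persist_aux {F : Type*} (I : Set F) (π : List (StripsAction F)) {x : F}
    (hdel : ∀ a ∈ π, x ∉ a.del) {i j : ℕ} (hij : i ≤ j)
    (hx : x ∈ stateAt I π i) : x ∈ stateAt I π j := by
  induction j, hij using Nat.le_induction with
  | base => exact hx
  | succ j hij ih =>
    unfold stateAt at ih ⊢
    rw [List.take_succ, List.foldl_append]
    cases h : π[j]? with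
    | none => simpa [h] using ih
    | some a =>
      have ha : a ∈ π := by obtain ⟨hlt, rfl⟩ := List.getElem?_eq_some_iff.mp h; exact List.getElem_mem _
      simp only [h, Option.toList_some, List.foldl_cons, List.foldl_nil]
      exact Or.inl ⟨ih, hdel a ha⟩

/-- Ordering via ordering fluents: each observation `o` has a dedicated fluent
`p o`, initially false, added only by its explanation action `e o`, never
deleted, and required false by `e o` itself. If every explanation action for an
observation in the later member `O₂` of an ordered group has `p o₁` as a
precondition for every `o₁` in the earlier member `O₁`, then in any valid plan
achieving all ordering fluents, every occurrence of an explanation action for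
`O₁` is strictly before every occurrence of an explanation action for `O₂`. -/
theorem earlier_explanations_precede_later {F O : Type*} (I : Set F)
    (π : List (StripsAction F)) (e : O → StripsAction F) (p : O → F)
    (O₁ O₂ : Set O)
    (hpinj : Function.Injective p)
    (hinit : ∀ o, p o ∉ I)
    (hadd : ∀ o, p o ∈ (e o).add)
    (honly : ∀ o, ∀ a ∈ π, p o ∈ a.add → a = e o)
    (hdel : ∀ o, ∀ a ∈ π, p o ∉ a.del)
    (hselfnpre : ∀ o, p o ∈ (e o).npre)
    (hord : ∀ o₂ ∈ O₂, ∀ o₁ ∈ O₁, p o₁ ∈ (e o₂).pre)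
    (hvalid : ValidPlan I π)
    (hachieve : ∀ o, p o ∈ stateAt I π π.length) :
    ∀ o₁ ∈ O₁, ∀ o₂ ∈ O₂, ∀ i₁ i₂,
      π[(i₁ : ℕ)]? = some (e o₁) → π[(i₂ : ℕ)]? = some (e o₂) → i₁ < i₂ := by
  intro o₁ h₁ o₂ h₂ i₁ i₂ hg₁ hg₂
  by_contra hle
  push_neg at hle
  have happ₂ := hvalid i₂ _ hg₂
  have happ₁ := hvalid i₁ _ hg₁
  -- p o₁ holds at state i₂ (precondition of e o₂)
  have hp₂ : p o₁ ∈ stateAt I π i₂ := happ₂.1 (hord o₂ h₂ o₁ h₁)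
  -- persists to state i₁
  have hp₁ : p o₁ ∈ stateAt I π i₁ :=
    persist_aux I π (hdel o₁) hle hp₂
  -- but e o₁ requires p o₁ false
  exact happ₁.2 (p o₁) (hselfnpre o₁) hp₁
end

section
/- If a plan segment π_j^k (over the compiled action set) achieves the ordering fluent p_o for a fluent observation o with fluent set F_o, then F_o is a subset of some state occurring in the execution trace of π_j^k, and hence ψ(π_j^k) satisfies o. -/

lemma stateAt_succ' {F : Type*} (I : Set F) (π : List (StripsAction F)) (i : ℕ) :
    stateAt I π (i+1) = (π[i]?).toList.foldl applyAction (stateAt I π i) := by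
  simp [stateAt, List.take_succ, List.foldl_append]

lemma exists_adder {F : Type*} (I : Set F) (π : List (StripsAction F)) (p : F)
    (hinit : p ∉ I) : ∀ n, p ∈ stateAt I π n →
    ∃ i < n, p ∉ stateAt I π i ∧ p ∈ stateAt I π (i+1) := by
  intro n
  induction n with
  | zero => intro h; exact absurd h (by simpa [stateAt] using hinit)
  | succ m ih =>
    intro h
    by_cases hm : p ∈ stateAt I π m
    · obtain ⟨i, hi, h1, h2⟩ := ih hm
      exact ⟨i, Nat.lt_succ_of_lt hi, h1, h2⟩
    · exact ⟨m, Nat.lt_succ_self m, hm, h⟩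

/-- Lemma 1 (fluent-observation case): if a valid plan segment `π` over the
compiled actions achieves the ordering fluent `p` of a fluent observation `o`
with fluent set `Fo` — where `p` is initially false and the only action adding
`p` is the explanation action `e`, whose preconditions include `Fo` — then `Fo`
is a subset of some state of the execution trace of `π`; hence, given that the
trace of `ψ(π)` agrees with that of `π` on the non-ordering fluents (which
include `Fo`), the transformed plan `ψ(π)` satisfies `o`. -/
theorem achieving_fluent_obs_ordering_fluent_implies_satisfaction
    {F : Type*} (I : Set F) (π : List (StripsAction F))
    (e : StripsAction F) (p : F) (Fo : Set F)
    (hinit : p ∉ I)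
    (honly : ∀ a ∈ π, p ∈ a.add → a = e)
    (hpre : Fo ⊆ e.pre)
    (hvalid : ValidPlan I π)
    (hachieve : p ∈ stateAt I π π.length)
    -- the trace of ψ(π) agrees with the trace of π on non-ordering fluents
    (ψπ : List (StripsAction F)) (nonOrdering : Set F)
    (hFo : Fo ⊆ nonOrdering)
    (hagree : ∀ i ≤ π.length, ∃ i' ≤ ψπ.length,
      stateAt I π i ∩ nonOrdering = stateAt I ψπ i' ∩ nonOrdering) :
    (∃ i ≤ π.length, Fo ⊆ stateAt I π i) ∧
    (∃ i' ≤ ψπ.length, Fo ⊆ stateAt I ψπ i') := by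
  have key : ∃ i ≤ π.length, Fo ⊆ stateAt I π i := by
    obtain ⟨i, hi, h1, h2⟩ := exists_adder I π p hinit π.length hachieve
    have hget : ∃ a, π[i]? = some a := by
      cases h : π[i]? with
      | none =>
        exfalso; apply h1
        rw [stateAt_succ', h] at h2
        simpa using h2
      | some a => exact ⟨a, rfl⟩
    obtain ⟨a, ha⟩ := hget
    have hmem : a ∈ π := List.mem_of_getElem? ha
    have hadd : p ∈ a.add := by
      rw [stateAt_succ', ha] at h2
      simp only [Option.toList_some, List.foldl_cons, List.foldl_nil, applyAction] at h2
      rcases h2 with h | h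
      · exact absurd h.1 h1
      · exact h
    have hae : a = e := honly a hmem hadd
    have happ := hvalid i a ha
    exact ⟨i, Nat.le_of_lt hi, fun x hx => happ.1 (hae ▸ hpre hx)⟩
  refine ⟨key, ?_⟩
  obtain ⟨i, hi, hsub⟩ := key
  obtain ⟨i', hi', heq⟩ := hagree i hi
  refine ⟨i', hi', fun x hx => ?_⟩
  have : x ∈ stateAt I π i ∩ nonOrdering := ⟨hsub hx, hFo hx⟩
  rw [heq] at this
  exact this.1
end

section
/- If a plan segment π_j^k over the compiled actions achieves the ordering fluent p_o for an action observation o of action a, then ψ(π_j^k) contains a, i.e., ψ(π_j^k) satisfies o. -/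
lemma mem_foldl_apply {F : Type*} (p : F) :
    ∀ (π : List (StripsAction F)) (I : Set F), p ∈ π.foldl applyAction I →
      p ∈ I ∨ ∃ x ∈ π, p ∈ x.add
  | [], I, h => Or.inl h
  | b :: π, I, h => by
    rcases mem_foldl_apply p π (applyAction I b) h with h1 | ⟨x, hx, hpx⟩
    · rcases h1 with ⟨hI, _⟩ | hadd
      · exact Or.inl hI
      · exact Or.inr ⟨b, List.mem_cons_self, hadd⟩
    · exact Or.inr ⟨x, List.mem_cons_of_mem _ hx, hpx⟩

/-- Lemma 1 (action-observation case): if a valid plan segment `π` over the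
compiled actions achieves the ordering fluent `p` of an action observation `o`
of original action `a` — where `p` is initially false and the only compiled
action adding `p` is the explanation action `e`, which the transformation
`ψ` (given by `π.filterMap ψstep`) maps back to `a` — then `ψ(π)` contains `a`,
i.e. `ψ(π)` satisfies `o`. -/
theorem achieving_action_obs_ordering_fluent_implies_satisfaction
    {F A : Type*} (I : Set F) (π : List (StripsAction F))
    (e : StripsAction F) (p : F) (a : A)
    (ψstep : StripsAction F → Option A)
    (hinit : p ∉ I)
    (honly : ∀ x ∈ π, p ∈ x.add → x = e)
    (hψe : ψstep e = some a)
    (hvalid : ValidPlan I π)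
    (hachieve : p ∈ stateAt I π π.length) :
    a ∈ π.filterMap ψstep := by
  rw [stateAt, List.take_length] at hachieve
  rcases mem_foldl_apply p π I hachieve with h | ⟨x, hx, hpx⟩
  · exact absurd h hinit
  · have := honly x hx hpx
    subst this
    exact List.mem_filterMap.2 ⟨x, hx, hψe⟩
end
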